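/- arXiv:2303.07241 — 2 statements merged into one kernel-verified Lean document; each statement's English description precedes it below -/
import Mathlib

section
/- Let A ∈ ℝ^{n×n}, B ∈ ℝ^{n×p}, and let g : ℝ^n → ℝ^p satisfy ‖g(x) − g(x*)‖ ≤ c‖x − x*‖ for some c ≥ 0 and fixed x* with A x* + B g(x*) = x*. Suppose there exist X ≻ 0, λ ≥ 0, and ρ ∈ [0,1) such that the block matrix [[AᵀXA − ρ²X, AᵀXB],[BᵀXA, BᵀXB]] + λ·[[c²I, 0],[0, −I]] is negative semidefinite. Then for x_{k+1} = A x_k + B g(x_k), the function V(x) = (x−x*)ᵀX(x−x*) satisfies V(x_{k+1}) ≤ ρ² V(x_k) for all k. -/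
open Matrix

/-- dissipativity certificate: if `g` satisfies the Lipschitz-type quadratic
constraint around a fixed point `x*` of `x ↦ Ax + Bg(x)` and the LMI
`[[AᵀXA − ρ²X, AᵀXB],[BᵀXA, BᵀXB]] + λ diag(c²I, −I) ⪯ 0` holds with `X ≻ 0`, `λ ≥ 0`,
`ρ ∈ [0,1)`, then `V(x) = (x−x*)ᵀX(x−x*)` contracts: `V(x_{k+1}) ≤ ρ² V(x_k)`. -/
theorem stmt5 {n p : ℕ} (A : Matrix (Fin n) (Fin n) ℝ) (B : Matrix (Fin n) (Fin p) ℝ)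
    (g : (Fin n → ℝ) → Fin p → ℝ) (c : ℝ) (hc : 0 ≤ c) (xs : Fin n → ℝ)
    (hg : ∀ x, Real.sqrt ((g x - g xs) ⬝ᵥ (g x - g xs)) ≤
      c * Real.sqrt ((x - xs) ⬝ᵥ (x - xs)))
    (hfix : A.mulVec xs + B.mulVec (g xs) = xs)
    (X : Matrix (Fin n) (Fin n) ℝ) (hX : X.PosDef) (lam : ℝ) (hlam : 0 ≤ lam)
    (ρ : ℝ) (hρ : ρ ∈ Set.Ico (0 : ℝ) 1)
    (hLMI : (-(Matrix.fromBlocks (Aᵀ * X * A - ρ ^ 2 • X) (Aᵀ * X * B) (Bᵀ * X * A) (Bᵀ * X * B)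
        + lam • Matrix.fromBlocks ((c ^ 2) • (1 : Matrix (Fin n) (Fin n) ℝ)) 0 0
          (-1 : Matrix (Fin p) (Fin p) ℝ))).PosSemidef)
    (x : ℕ → Fin n → ℝ) (hdyn : ∀ k, x (k + 1) = A.mulVec (x k) + B.mulVec (g (x k))) :
    ∀ k, (x (k + 1) - xs) ⬝ᵥ X.mulVec (x (k + 1) - xs) ≤
      ρ ^ 2 * ((x k - xs) ⬝ᵥ X.mulVec (x k - xs)) := by
  intro k
  set e : Fin n → ℝ := x k - xs with he
  set w : Fin p → ℝ := g (x k) - g xs with hw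
  have hstep : x (k + 1) - xs = A *ᵥ e + B *ᵥ w := by
    rw [hdyn k]
    conv_lhs => rw [← hfix]
    simp [he, hw, mulVec_sub]
    abel
  -- Lipschitz bound squared
  have hw2 : w ⬝ᵥ w ≤ c ^ 2 * (e ⬝ᵥ e) := by
    have h1 := hg (x k)
    have hnn : 0 ≤ w ⬝ᵥ w := (by simpa using dotProduct_self_star_nonneg w : (0:ℝ) ≤ w ⬝ᵥ w)
    have hnn' : 0 ≤ e ⬝ᵥ e := (by simpa using dotProduct_self_star_nonneg e : (0:ℝ) ≤ e ⬝ᵥ e)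
    have := mul_self_le_mul_self (Real.sqrt_nonneg _) h1
    rw [Real.mul_self_sqrt hnn] at this
    calc w ⬝ᵥ w ≤ (c * Real.sqrt (e ⬝ᵥ e)) * (c * Real.sqrt (e ⬝ᵥ e)) := this
      _ = c ^ 2 * (Real.sqrt (e ⬝ᵥ e) * Real.sqrt (e ⬝ᵥ e)) := by ring
      _ = c ^ 2 * (e ⬝ᵥ e) := by rw [Real.mul_self_sqrt hnn']
  -- quadratic form from the LMI
  have hq := hLMI.dotProduct_mulVec_nonneg (Sum.elim e w)
  rw [star_trivial] at hq
  rw [neg_mulVec, dotProduct_neg, add_mulVec, smul_mulVec] at hq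
  rw [fromBlocks_mulVec, fromBlocks_mulVec] at hq
  simp only [Sum.elim_comp_inl, Sum.elim_comp_inr, dotProduct_smul,
    sumElim_dotProduct_sumElim, dotProduct_add, sub_mulVec, dotProduct_sub,
    smul_mulVec, zero_mulVec, add_zero, zero_add, neg_mulVec, one_mulVec,
    dotProduct_neg, smul_eq_mul] at hq
  -- rewrite the block quadratic terms
  have hAA : e ⬝ᵥ (Aᵀ * X * A) *ᵥ e = (A *ᵥ e) ⬝ᵥ X *ᵥ (A *ᵥ e) := by
    rw [← mulVec_mulVec, ← mulVec_mulVec, dotProduct_mulVec, vecMul_transpose]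
  have hAB : e ⬝ᵥ (Aᵀ * X * B) *ᵥ w = (A *ᵥ e) ⬝ᵥ X *ᵥ (B *ᵥ w) := by
    rw [← mulVec_mulVec, ← mulVec_mulVec, dotProduct_mulVec, vecMul_transpose]
  have hBA : w ⬝ᵥ (Bᵀ * X * A) *ᵥ e = (B *ᵥ w) ⬝ᵥ X *ᵥ (A *ᵥ e) := by
    rw [← mulVec_mulVec, ← mulVec_mulVec, dotProduct_mulVec, vecMul_transpose]
  have hBB : w ⬝ᵥ (Bᵀ * X * B) *ᵥ w = (B *ᵥ w) ⬝ᵥ X *ᵥ (B *ᵥ w) := by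
    rw [← mulVec_mulVec, ← mulVec_mulVec, dotProduct_mulVec, vecMul_transpose]
  rw [hAA, hAB, hBA, hBB] at hq
  have hexp : (A *ᵥ e + B *ᵥ w) ⬝ᵥ X *ᵥ (A *ᵥ e + B *ᵥ w)
      = (A *ᵥ e) ⬝ᵥ X *ᵥ (A *ᵥ e) + (A *ᵥ e) ⬝ᵥ X *ᵥ (B *ᵥ w)
        + (B *ᵥ w) ⬝ᵥ X *ᵥ (A *ᵥ e) + (B *ᵥ w) ⬝ᵥ X *ᵥ (B *ᵥ w) := by
    rw [mulVec_add, dotProduct_add, add_dotProduct, add_dotProduct]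
    ring
  have hlip : 0 ≤ lam * (c ^ 2 * (e ⬝ᵥ e) - w ⬝ᵥ w) :=
    mul_nonneg hlam (by linarith)
  rw [hstep, hexp]
  nlinarith [hq, hlip]
end

section
/- Let L_F ∈ ℝ^{n_F×n_F} be symmetric positive definite, α_i ∈ (0,1] for each i, and A_F = diag(α_1,…,α_{n_F}) − τ L_F with τ > 0. If τ < (min_i (1 + α_i)) / λ_max(L_F), then A_F is symmetric and every eigenvalue of A_F has absolute value strictly less than 1. -/
open Matrix

lemma quad_le_of_eigen {n : ℕ} {B : Matrix (Fin n) (Fin n) ℝ} (hB : B.IsHermitian) (c : ℝ)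
    (hc : ∀ i, hB.eigenvalues i ≤ c) (x : Fin n → ℝ) :
    x ⬝ᵥ (B *ᵥ x) ≤ c * (x ⬝ᵥ x) := by
  have hU : (hB.eigenvectorUnitary : Matrix (Fin n) (Fin n) ℝ) *
      star (hB.eigenvectorUnitary : Matrix (Fin n) (Fin n) ℝ) = 1 :=
    (Matrix.mem_unitaryGroup_iff).mp hB.eigenvectorUnitary.2
  have key : c • (1 : Matrix (Fin n) (Fin n) ℝ) - B =
      (hB.eigenvectorUnitary : Matrix (Fin n) (Fin n) ℝ) *
        (c • 1 - diagonal (RCLike.ofReal ∘ hB.eigenvalues)) *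
        star (hB.eigenvectorUnitary : Matrix (Fin n) (Fin n) ℝ) := by
    rw [Matrix.mul_sub, Matrix.sub_mul, Matrix.mul_smul, Matrix.smul_mul, Matrix.mul_one, hU]
    exact congrArg (c • (1 : Matrix (Fin n) (Fin n) ℝ) - ·) hB.spectral_theorem
  have hdiag : (c • (1 : Matrix (Fin n) (Fin n) ℝ) -
      diagonal (RCLike.ofReal ∘ hB.eigenvalues)) =
      diagonal (fun i => c - hB.eigenvalues i) := by
    ext j k
    rcases eq_or_ne j k with rfl | hne
    · simp [Matrix.one_apply_eq]
    · simp [Matrix.diagonal_apply_ne _ hne, Matrix.one_apply_ne hne]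
  have hM : (c • (1 : Matrix (Fin n) (Fin n) ℝ) - B).PosSemidef := by
    rw [key, hdiag]
    exact (Matrix.posSemidef_diagonal_iff.mpr fun i => sub_nonneg.mpr (hc i)
      ).mul_mul_conjTranspose_same _
  have h := hM.dotProduct_mulVec_nonneg x
  simp only [Matrix.sub_mulVec, Matrix.smul_mulVec, Matrix.one_mulVec, dotProduct_sub,
    dotProduct_smul, smul_eq_mul, star_trivial, RCLike.re_to_real] at h
  linarith

/-- Let `L_F ≻ 0` symmetric, `α_i ∈ (0,1]`, `τ > 0` with
`τ < (min_i (1+α_i))/λ_max(L_F)`. Then `A_F = diag(α) − τ L_F` is symmetric and all its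
eigenvalues have absolute value strictly less than 1. -/
theorem stmt9 {n : ℕ} [NeZero n] (L : Matrix (Fin n) (Fin n) ℝ) (hL : L.PosDef)
    (α : Fin n → ℝ) (hα : ∀ i, α i ∈ Set.Ioc (0 : ℝ) 1) (τ : ℝ) (hτ : 0 < τ)
    (hτ2 : τ < (⨅ i, (1 + α i)) / (⨆ i, hL.1.eigenvalues i)) :
    (Matrix.diagonal α - τ • L).IsHermitian ∧
      ∀ (h : (Matrix.diagonal α - τ • L).IsHermitian) (i : Fin n),
        |h.eigenvalues i| < 1 := by
  have hHerm : (Matrix.diagonal α - τ • L).IsHermitian := by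
    refine (Matrix.isHermitian_diagonal α).sub ?_
    have hLt : Lᵀ = L := by
      rw [← Matrix.conjTranspose_eq_transpose_of_trivial]; exact hL.1.eq
    rw [Matrix.IsHermitian, Matrix.conjTranspose_smul,
      Matrix.conjTranspose_eq_transpose_of_trivial, hLt, star_trivial]
  refine ⟨hHerm, fun h i => ?_⟩
  set S : ℝ := ⨆ i, hL.1.eigenvalues i with hS_def
  set I : ℝ := ⨅ i, (1 + α i) with hI_def
  set m : ℝ := ⨅ i, α i with hm_def
  have hbddA : BddAbove (Set.range hL.1.eigenvalues) :=
    (Set.finite_range _).bddAbove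
  have hSle : ∀ j, hL.1.eigenvalues j ≤ S := fun j => le_ciSup hbddA j
  have hSpos : 0 < S := lt_of_lt_of_le (hL.eigenvalues_pos i) (hSle i)
  have hτS : τ * S < I := (lt_div_iff₀ hSpos).mp hτ2
  have hIle : ∀ j, I ≤ 1 + α j := fun j =>
    ciInf_le ((Set.finite_range _).bddBelow) j
  have hmle : ∀ j, m ≤ α j := fun j =>
    ciInf_le ((Set.finite_range _).bddBelow) j
  have hIm : I ≤ 1 + m := by
    have : I - 1 ≤ m := le_ciInf fun j => by linarith [hIle j]
    linarith
  -- eigenvector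
  set v : Fin n → ℝ := ⇑(h.eigenvectorBasis i) with hv_def
  have hvne : v ≠ 0 := by
    have := h.eigenvectorBasis.toBasis.ne_zero i
    simpa [hv_def] using fun hzero => this (by simpa using hzero)
  have hnorm : ‖h.eigenvectorBasis i‖ = 1 := h.eigenvectorBasis.orthonormal.1 i
  have hv1 : v ⬝ᵥ v = 1 := by
    have : (v ⬝ᵥ v) = @inner ℝ _ _ (h.eigenvectorBasis i) (h.eigenvectorBasis i) := by
      simp only [PiLp.inner_apply, RCLike.inner_apply, starRingEnd_apply, star_trivial,
        dotProduct]
      rfl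
    rw [this, real_inner_self_eq_norm_sq, hnorm, one_pow]
  have heig : h.eigenvalues i = v ⬝ᵥ ((Matrix.diagonal α - τ • L) *ᵥ v) := by
    simpa using h.eigenvalues_eq i
  have hexpand : v ⬝ᵥ ((Matrix.diagonal α - τ • L) *ᵥ v) =
      v ⬝ᵥ (Matrix.diagonal α *ᵥ v) - τ * (v ⬝ᵥ (L *ᵥ v)) := by
    simp [Matrix.sub_mulVec, Matrix.smul_mulVec, dotProduct_sub]
  set q : ℝ := v ⬝ᵥ (L *ᵥ v) with hq_def
  have hqpos : 0 < q := by
    have := hL.dotProduct_mulVec_pos hvne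
    simpa [hq_def] using this
  have hqle : q ≤ S := by
    have := quad_le_of_eigen hL.1 S hSle v
    rw [hv1, mul_one] at this
    exact this
  set d : ℝ := v ⬝ᵥ (Matrix.diagonal α *ᵥ v) with hd_def
  have hd_sum : d = ∑ j, α j * (v j * v j) := by
    simp [hd_def, dotProduct, Matrix.mulVec_diagonal]
    exact Finset.sum_congr rfl fun j _ => by ring
  have hsum_sq : ∑ j, v j * v j = 1 := by
    simpa [dotProduct] using hv1
  have hd_le : d ≤ 1 := by
    rw [hd_sum, ← hsum_sq]
    exact Finset.sum_le_sum fun j _ => by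
      have := (hα j).2
      nlinarith [mul_self_nonneg (v j)]
  have hd_ge : m ≤ d := by
    rw [hd_sum]
    calc m = ∑ j, m * (v j * v j) := by
          rw [← Finset.mul_sum, hsum_sq, mul_one]
      _ ≤ ∑ j, α j * (v j * v j) := Finset.sum_le_sum fun j _ => by
          nlinarith [hmle j, mul_self_nonneg (v j)]
  have heq : h.eigenvalues i = d - τ * q := by rw [heig, hexpand]
  rw [abs_lt, heq]
  constructor
  · have h1 : τ * q ≤ τ * S := by nlinarith
    linarith
  · nlinarith
end
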